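/- Let 2 ≤ n₀ < ∞ and let S be submultiplicative on [1,n₀]. Then there exists ε₀ > 0 such that for all 0 < ε < ε₀, the extension S_ε of S to [1, n₀²] defined by S_ε(x) = S(x) for 1 ≤ x ≤ n₀ and S_ε(x) = S(n₀) + ε(x − n₀) for n₀ < x ≤ n₀² is submultiplicative on [1, n₀²]. -/

import Mathlib

/-- `S` is piecewise linear on `[a,b]`: affine on each interval of some finite
partition `a = t 0 < t 1 < ⋯ < t m = b`. -/
def PiecewiseLinearOn (S : ℝ → ℝ) (a b : ℝ) : Prop :=
  ∃ m : ℕ, ∃ t : ℕ → ℝ, 0 < m ∧ t 0 = a ∧ t m = b ∧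
    (∀ i < m, t i < t (i + 1)) ∧
    ∀ i < m, ∃ c d : ℝ, ∀ x ∈ Set.Icc (t i) (t (i + 1)), S x = c * x + d

/-- `S` is submultiplicative on `[1, n₀]`:
(a) piecewise linear, continuous, strictly increasing and concave on `[1,n₀]`;
(b) `S x = x` for `1 ≤ x ≤ 2`;
(c) `S (x*y) ≤ S x * S y` whenever `1 ≤ x`, `1 ≤ y` and `x*y ≤ n₀`. -/
structure IsSubmultOn (S : ℝ → ℝ) (n₀ : ℝ) : Prop where
  piecewiseLinear : PiecewiseLinearOn S 1 n₀
  continuousOn : ContinuousOn S (Set.Icc 1 n₀)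
  strictMonoOn : StrictMonoOn S (Set.Icc 1 n₀)
  concaveOn : ConcaveOn ℝ (Set.Icc 1 n₀) S
  eq_id : ∀ x : ℝ, 1 ≤ x → x ≤ 2 → S x = x
  submult : ∀ x y : ℝ, 1 ≤ x → 1 ≤ y → x * y ≤ n₀ → S (x * y) ≤ S x * S y

set_option maxHeartbeats 2000000 in
/-- Lemma 2.2. If `S` is submultiplicative on `[1, n₀]` with
`2 ≤ n₀ < ∞`, then there is `ε₀ > 0` such that for all `0 < ε < ε₀`, the extension
`S_ε` (equal to `S` on `[1,n₀]` and to `S n₀ + ε (x - n₀)` for `n₀ < x ≤ n₀²`)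
is submultiplicative on `[1, n₀²]`. -/
theorem statement0 (n₀ : ℝ) (hn₀ : 2 ≤ n₀) (S : ℝ → ℝ) (hS : IsSubmultOn S n₀) :
    ∃ ε₀ > (0 : ℝ), ∀ ε : ℝ, 0 < ε → ε < ε₀ →
      IsSubmultOn (fun x => if x ≤ n₀ then S x else S n₀ + ε * (x - n₀)) (n₀ ^ 2) := by
  have h1n : (1:ℝ) ≤ n₀ := by linarith
  have h0n : (0:ℝ) < n₀ := by linarith
  have hS1 : S 1 = 1 := hS.eq_id 1 le_rfl one_le_two
  have hS2 : S 2 = 2 := hS.eq_id 2 one_le_two le_rfl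
  have hmono : MonotoneOn S (Set.Icc 1 n₀) := hS.strictMonoOn.monotoneOn
  have hSn₀2 : 2 ≤ S n₀ := by
    have := hmono (Set.mem_Icc.2 ⟨one_le_two, hn₀⟩) (Set.mem_Icc.2 ⟨h1n, le_rfl⟩) hn₀
    rwa [hS2] at this
  have hSge1 : ∀ x, 1 ≤ x → x ≤ n₀ → 1 ≤ S x := by
    intro x hx hxn
    have := hmono (Set.mem_Icc.2 ⟨le_rfl, h1n⟩) (Set.mem_Icc.2 ⟨hx, hxn⟩) hx
    rwa [hS1] at this
  -- basic concavity inequality without divisions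
  have base : ∀ a b c : ℝ, 1 ≤ a → a ≤ b → b ≤ c → c ≤ n₀ →
      (c - b) * S a + (b - a) * S c ≤ (c - a) * S b := by
    intro a b c ha hab hbc hcn
    rcases eq_or_lt_of_le (hab.trans hbc) with h | h
    · have hba : b = a := le_antisymm (h ▸ hbc) hab
      subst hba
      rw [← h]
      apply le_of_eq; ring
    · have hca : 0 < c - a := by linarith
      have hkey := hS.concaveOn.2 (Set.mem_Icc.2 ⟨ha, by linarith⟩)
        (Set.mem_Icc.2 ⟨by linarith, hcn⟩)
        (show 0 ≤ (c-b)/(c-a) from div_nonneg (by linarith) hca.le)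
        (show 0 ≤ (b-a)/(c-a) from div_nonneg (by linarith) hca.le)
        (by field_simp; ring)
      rw [smul_eq_mul, smul_eq_mul, smul_eq_mul, smul_eq_mul] at hkey
      have harg : (c-b)/(c-a) * a + (b-a)/(c-a) * c = b := by field_simp; ring
      rw [harg] at hkey
      have h2 : (c-b) * S a + (b-a) * S c = (c-a) * ((c-b)/(c-a) * S a + (b-a)/(c-a) * S c) := by
        field_simp
      rw [h2]
      exact mul_le_mul_of_nonneg_left hkey hca.le
  obtain ⟨m, t, hm, ht0, htm, htlt, htaff⟩ := hS.piecewiseLinear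
  have tmono : ∀ j, j ≤ m → ∀ i, i ≤ j → t i ≤ t j := by
    intro j
    induction j with
    | zero => intro _ i hi; have : i = 0 := Nat.le_zero.mp hi; rw [this]
    | succ k ih =>
      intro hk i hi
      rcases Nat.lt_or_ge i (k+1) with h | h
      · exact le_trans (ih (by omega) i (by omega)) (htlt k (by omega)).le
      · have : i = k + 1 := by omega
        rw [this]
  set p := t (m-1) with hp
  have hpm : m - 1 + 1 = m := Nat.succ_pred_eq_of_pos hm
  have hp1 : 1 ≤ p := ht0 ▸ tmono (m-1) (by omega) 0 (by omega)
  have hpn : p < n₀ := by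
    have := htlt (m-1) (by omega)
    rwa [hpm, htm] at this
  have hSpn : S p < S n₀ :=
    hS.strictMonoOn (Set.mem_Icc.2 ⟨hp1, hpn.le⟩) (Set.mem_Icc.2 ⟨h1n, le_rfl⟩) hpn
  set σ := (S n₀ - S p)/(n₀ - p) with hσ
  have hσpos : 0 < σ := div_pos (by linarith) (by linarith)
  obtain ⟨cl, dl, hcd⟩ := htaff (m-1) (by omega)
  rw [hpm, htm] at hcd
  have hnp : n₀ - p ≠ 0 := sub_ne_zero.mpr hpn.ne'
  have hcl : cl = σ := by
    have e1 := hcd p (Set.mem_Icc.2 ⟨le_rfl, hpn.le⟩)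
    have e2 := hcd n₀ (Set.mem_Icc.2 ⟨hpn.le, le_rfl⟩)
    rw [hσ, e1, e2]
    field_simp
    ring
  have chordn : ∀ a, 1 ≤ a → a ≤ n₀ → σ * (n₀ - a) ≤ S n₀ - S a := by
    intro a ha han
    rcases le_or_gt a p with h | h
    · have hb := base a p n₀ ha h hpn.le le_rfl
      rw [hσ, div_mul_eq_mul_div, div_le_iff₀ (by linarith : (0:ℝ) < n₀ - p)]
      nlinarith [hb]
    · rw [hcd a (Set.mem_Icc.2 ⟨h.le, han⟩), hcd n₀ (Set.mem_Icc.2 ⟨hpn.le, le_rfl⟩), ← hcl]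
      apply le_of_eq; ring
  have chord : ∀ a b, 1 ≤ a → a ≤ b → b ≤ n₀ → σ * (b - a) ≤ S b - S a := by
    intro a b ha hab hbn
    rcases eq_or_lt_of_le hab with rfl | hab'
    · simp
    rcases eq_or_lt_of_le hbn with rfl | hbn'
    · exact chordn a ha hab
    have h1 := base a b n₀ ha hab hbn le_rfl
    have h2 := chordn a ha (by linarith)
    have h3 : (b-a) * (σ * (n₀ - a)) ≤ (b-a) * (S n₀ - S a) :=
      mul_le_mul_of_nonneg_left h2 (by linarith)
    have h4 : σ * (b-a) * (n₀-a) ≤ (S b - S a) * (n₀-a) := by nlinarith [h1, h3]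
    exact le_of_mul_le_mul_right h4 (by linarith)
  have hNpos : (0:ℝ) < n₀ * S n₀ + n₀^3 := by
    have h1 := mul_pos h0n (show (0:ℝ) < S n₀ by linarith)
    have h2 := pow_pos h0n 3
    linarith
  refine ⟨min (σ/n₀) (2/(n₀ * S n₀ + n₀^3)), lt_min (div_pos hσpos h0n)
    (div_pos two_pos hNpos), ?_⟩
  intro ε hε0 hεlt
  have hεσn : ε * n₀ ≤ σ := by
    have h := (lt_min_iff.mp hεlt).1
    rw [lt_div_iff₀ h0n] at h
    linarith
  have hεσ : ε ≤ σ := by nlinarith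
  have hε2 : ε * (n₀ * S n₀ + n₀^3) ≤ 2 := by
    have h := (lt_min_iff.mp hεlt).2
    rw [lt_div_iff₀ hNpos] at h
    linarith
  set f : ℝ → ℝ := fun x => if x ≤ n₀ then S x else S n₀ + ε * (x - n₀) with hfdef
  have hfle : ∀ x : ℝ, x ≤ n₀ → f x = S x := by
    intro x hx
    simp only [hfdef]
    exact if_pos hx
  have hfgt : ∀ x : ℝ, n₀ ≤ x → f x = S n₀ + ε * (x - n₀) := by
    intro x hx
    rcases eq_or_lt_of_le hx with rfl | h
    · simp only [hfdef, if_pos le_rfl]; ring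
    · simp only [hfdef]; exact if_neg (not_le.2 h)
  have hSleL : ∀ x, 1 ≤ x → x ≤ n₀ → S x ≤ S n₀ + ε * (x - n₀) := by
    intro x hx1 hx2
    have h1 := chord x n₀ hx1 hx2 le_rfl
    have h2 : ε * (n₀ - x) ≤ σ * (n₀ - x) :=
      mul_le_mul_of_nonneg_right hεσ (by linarith)
    linarith
  -- piecewise linear
  have hPL : PiecewiseLinearOn f 1 (n₀^2) := by
    refine ⟨m+1, fun i => if i ≤ m then t i else n₀^2, by omega, ?_, ?_, ?_, ?_⟩
    · simp only [if_pos (Nat.zero_le m)]; exact ht0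
    · simp only [if_neg (by omega : ¬ m+1 ≤ m)]
    · intro i hi
      rcases Nat.lt_or_ge i m with h | h
      · simp only [if_pos (by omega : i ≤ m), if_pos (by omega : i+1 ≤ m)]
        exact htlt i h
      · have hi' : i = m := by omega
        subst hi'
        simp only [if_pos le_rfl, if_neg (by omega : ¬ i+1 ≤ i), htm]
        nlinarith
    · intro i hi
      rcases Nat.lt_or_ge i m with h | h
      · obtain ⟨c, d, hcd'⟩ := htaff i h
        refine ⟨c, d, ?_⟩
        intro x hx
        simp only [if_pos (by omega : i ≤ m), if_pos (by omega : i+1 ≤ m)] at hx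
        have hxn : x ≤ n₀ := le_trans hx.2 (htm ▸ tmono m le_rfl (i+1) (by omega))
        rw [hfle x hxn]
        exact hcd' x hx
      · have hi' : i = m := by omega
        subst hi'
        refine ⟨ε, S n₀ - ε * n₀, ?_⟩
        intro x hx
        simp only [if_pos le_rfl, if_neg (by omega : ¬ i+1 ≤ i), htm] at hx
        rw [hfgt x hx.1]; ring
  -- continuity
  have hCont : ContinuousOn f (Set.Icc 1 (n₀^2)) := by
    have hfeq : f = fun x => S (min x n₀) + ε * (max x n₀ - n₀) := by
      funext x
      by_cases h : x ≤ n₀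
      · rw [hfle x h, min_eq_left h, max_eq_right h]; ring
      · push_neg at h
        rw [hfgt x h.le, min_eq_right h.le, max_eq_left h.le]
    rw [hfeq]
    apply ContinuousOn.add
    · exact hS.continuousOn.comp ((continuous_id.min continuous_const).continuousOn)
        (fun x hx => Set.mem_Icc.2 ⟨le_min hx.1 h1n, min_le_right _ _⟩)
    · exact (continuous_const.mul ((continuous_id.max continuous_const).sub
        continuous_const)).continuousOn
  -- strict monotonicity
  have hMono : StrictMonoOn f (Set.Icc 1 (n₀^2)) := by
    intro u hu v hv huv
    by_cases hvn : v ≤ n₀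
    · rw [hfle u (huv.le.trans hvn), hfle v hvn]
      exact hS.strictMonoOn (Set.mem_Icc.2 ⟨hu.1, huv.le.trans hvn⟩)
        (Set.mem_Icc.2 ⟨hv.1, hvn⟩) huv
    · push_neg at hvn
      rw [hfgt v hvn.le]
      by_cases hun : u ≤ n₀
      · rw [hfle u hun]
        have h1 : S u ≤ S n₀ :=
          hmono (Set.mem_Icc.2 ⟨hu.1, hun⟩) (Set.mem_Icc.2 ⟨h1n, le_rfl⟩) hun
        nlinarith [mul_pos hε0 (sub_pos.2 hvn)]
      · push_neg at hun
        rw [hfgt u hun.le]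
        have : ε * (u - n₀) < ε * (v - n₀) := by
          apply mul_lt_mul_of_pos_left (by linarith) hε0
        linarith
  -- concavity
  have hConc : ConcaveOn ℝ (Set.Icc 1 (n₀^2)) f := by
    have claim : ∀ x ∈ Set.Icc (1:ℝ) (n₀^2), ∀ y ∈ Set.Icc (1:ℝ) (n₀^2), ∀ a b : ℝ,
        0 ≤ a → 0 ≤ b → a + b = 1 → x ≤ y → a * f x + b * f y ≤ f (a * x + b * y) := by
      intro x hx y hy a b ha hb hab hxy
      have hzx : x ≤ a*x + b*y := by
        calc x = a*x + b*x := by rw [← add_mul, hab, one_mul]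
        _ ≤ a*x + b*y := add_le_add_right (mul_le_mul_of_nonneg_left hxy hb) _
      have hzy : a*x + b*y ≤ y := by
        calc a*x + b*y ≤ a*y + b*y := add_le_add_left (mul_le_mul_of_nonneg_left hxy ha) _
        _ = y := by rw [← add_mul, hab, one_mul]
      by_cases hyn : y ≤ n₀
      · rw [hfle x (hxy.trans hyn), hfle y hyn, hfle _ (hzy.trans hyn)]
        have := hS.concaveOn.2 (Set.mem_Icc.2 ⟨hx.1, hxy.trans hyn⟩)
          (Set.mem_Icc.2 ⟨hy.1, hyn⟩) ha hb hab
        simpa using this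
      push_neg at hyn
      by_cases hxn : n₀ ≤ x
      · have hzn : n₀ ≤ a*x + b*y := le_trans hxn hzx
        rw [hfgt x hxn, hfgt y hyn.le, hfgt _ hzn]
        have hb' : b = 1 - a := by linarith
        subst hb'
        apply le_of_eq; ring
      push_neg at hxn
      by_cases hzn : a*x + b*y ≤ n₀
      · set c := (S n₀ - S x)/(n₀ - x) with hc
        have hnx : 0 < n₀ - x := by linarith
        have hcε : ε ≤ c := by
          rw [hc, le_div_iff₀ hnx]
          have h1 := chord x n₀ hx.1 hxn.le le_rfl
          have h2 : ε * (n₀ - x) ≤ σ * (n₀ - x) :=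
            mul_le_mul_of_nonneg_right hεσ hnx.le
          linarith
        set z := a*x + b*y with hz
        have hSz : S x + c * (z - x) ≤ S z := by
          have hkey := hS.concaveOn.2 (Set.mem_Icc.2 ⟨hx.1, hxn.le⟩)
            (Set.mem_Icc.2 ⟨h1n, le_rfl⟩)
            (show 0 ≤ (n₀ - z)/(n₀ - x) from div_nonneg (by linarith) hnx.le)
            (show 0 ≤ (z - x)/(n₀ - x) from div_nonneg (by linarith) hnx.le)
            (by field_simp; ring)
          rw [smul_eq_mul, smul_eq_mul, smul_eq_mul, smul_eq_mul] at hkey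
          have harg : (n₀ - z)/(n₀ - x) * x + (z - x)/(n₀ - x) * n₀ = z := by
            field_simp; ring
          rw [harg] at hkey
          have heq : S x + c * (z - x) = (n₀ - z)/(n₀ - x) * S x + (z - x)/(n₀ - x) * S n₀ := by
            rw [hc]; field_simp; ring
          rw [heq]
          exact hkey
        rw [hfle x hxn.le, hfgt y hyn.le, hfle z hzn]
        have hLy : S n₀ + ε * (y - n₀) ≤ S x + c * (y - x) := by
          have h1 : c * (n₀ - x) = S n₀ - S x := by
            rw [hc, div_mul_cancel₀ _ (ne_of_gt hnx)]
          have h2 : ε * (y - n₀) ≤ c * (y - n₀) :=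
            mul_le_mul_of_nonneg_right hcε (by linarith)
          linarith
        have hmain : a * S x + b * (S n₀ + ε * (y - n₀)) ≤ S x + c * (z - x) := by
          have hb' : b * (S n₀ + ε*(y-n₀)) ≤ b * (S x + c*(y-x)) :=
            mul_le_mul_of_nonneg_left hLy hb
          have he : a * S x + b * (S x + c * (y - x)) = S x + c * (z - x) := by
            rw [hz]; linear_combination (S x - c*x) * hab
          linarith
        linarith [hSz, hmain]
      · push_neg at hzn
        rw [hfle x hxn.le, hfgt y hyn.le, hfgt _ hzn.le]
        have hLx : S x ≤ S n₀ + ε * (x - n₀) := hSleL x hx.1 hxn.le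
        have he : a * (S n₀ + ε*(x-n₀)) + b * (S n₀ + ε*(y-n₀))
            = S n₀ + ε*(a*x+b*y - n₀) := by
          linear_combination (S n₀ - ε*n₀) * hab
        have hax : a * S x ≤ a * (S n₀ + ε*(x-n₀)) := mul_le_mul_of_nonneg_left hLx ha
        linarith
    refine ⟨convex_Icc 1 (n₀^2), ?_⟩
    intro x hx y hy a b ha hb hab
    simp only [smul_eq_mul]
    rcases le_total x y with h | h
    · exact claim x hx y hy a b ha hb hab h
    · have hcl := claim y hy x hx b a hb ha (by linarith) h
      have e : b*y + a*x = a*x + b*y := by ring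
      rw [e] at hcl
      linarith
  -- eq_id
  have hId : ∀ x : ℝ, 1 ≤ x → x ≤ 2 → f x = x := by
    intro x h1 h2
    rw [hfle x (h2.trans hn₀)]
    exact hS.eq_id x h1 h2
  -- submultiplicativity
  have hSub : ∀ x y : ℝ, 1 ≤ x → 1 ≤ y → x * y ≤ n₀^2 → f (x*y) ≤ f x * f y := by
    intro x y hx hy hxy
    by_cases hxyn : x * y ≤ n₀
    · have hxn : x ≤ n₀ := le_trans (le_mul_of_one_le_right (by linarith) hy) hxyn
      have hyn : y ≤ n₀ := le_trans (le_mul_of_one_le_left (by linarith) hx) hxyn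
      rw [hfle _ hxyn, hfle x hxn, hfle y hyn]
      exact hS.submult x y hx hy hxyn
    · push_neg at hxyn
      rw [hfgt _ hxyn.le]
      have key2a : ∀ u v : ℝ, 1 ≤ u → u ≤ n₀ → n₀ < v → u * v ≤ n₀^2 →
          S n₀ + ε * (u*v - n₀) ≤ S u * (S n₀ + ε * (v - n₀)) := by
        intro u v hu hun hvn huv
        have hvb : v ≤ n₀^2 := le_trans (le_mul_of_one_le_left (by linarith) hu) huv
        by_cases hu2 : u ≤ 2
        · rw [hS.eq_id u hu hu2]
          have hεn : ε * n₀ ≤ S n₀ := by nlinarith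
          nlinarith [mul_nonneg (sub_nonneg.2 hu) (sub_nonneg.2 hεn)]
        · push_neg at hu2
          have hSu2 : 2 ≤ S u := by
            have := hmono (Set.mem_Icc.2 ⟨one_le_two, hn₀⟩) (Set.mem_Icc.2 ⟨hu, hun⟩) hu2.le
            rwa [hS2] at this
          have hSun : S u ≤ S n₀ :=
            hmono (Set.mem_Icc.2 ⟨hu, hun⟩) (Set.mem_Icc.2 ⟨h1n, le_rfl⟩) hun
          have hkey : v * (u - S u) ≤ n₀^2 * (u - 1) := by
            rcases le_or_gt (S u) u with h | h
            · nlinarith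
            · nlinarith
          have e1 : ε * (v * (u - S u)) ≤ ε * (n₀^2 * (u-1)) :=
            mul_le_mul_of_nonneg_left hkey hε0.le
          have e4 : 0 ≤ ε * n₀^2 * (n₀ - u) :=
            mul_nonneg (mul_nonneg hε0.le (sq_nonneg n₀)) (by linarith)
          have e5 : 0 ≤ ε * n₀ * (S n₀ - S u) :=
            mul_nonneg (mul_nonneg hε0.le h0n.le) (by linarith)
          have e6 : 0 ≤ S n₀ * (S u - 2) := mul_nonneg (by linarith) (by linarith)
          have e7 : 0 ≤ ε * n₀^2 := mul_nonneg hε0.le (sq_nonneg n₀)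
          have e8 : 0 ≤ ε * n₀ := mul_nonneg hε0.le h0n.le
          nlinarith [e1, e4, e5, e6, e7, e8, hε2, hSn₀2]
      have key2b : ∀ u v : ℝ, 1 ≤ u → u ≤ n₀ → 1 ≤ v → v ≤ n₀ → n₀ < u*v →
          S n₀ + ε * (u*v - n₀) ≤ S u * S v := by
        intro u v hu hun hv hvn huv
        have hu0 : 0 < u := by linarith
        have h1 : 1 ≤ n₀/u := (one_le_div hu0).2 hun
        have h2 : n₀/u ≤ v := (div_le_iff₀ hu0).2 (by nlinarith)
        have hun' : u * (n₀/u) = n₀ := by field_simp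
        have h3 : S n₀ ≤ S u * S (n₀/u) := by
          have := hS.submult u (n₀/u) hu h1 (le_of_eq hun')
          rwa [hun'] at this
        have h4 := chord (n₀/u) v h1 h2 hvn
        have h5 : 1 ≤ S u := hSge1 u hu hun
        have h6 : ε * (u*v - n₀) ≤ σ * (v - n₀/u) := by
          have hd : u * (v - n₀/u) = u*v - n₀ := by field_simp
          calc ε * (u*v - n₀) = (ε * u) * (v - n₀/u) := by rw [← hd]; ring
            _ ≤ (ε * n₀) * (v - n₀/u) := by
              apply mul_le_mul_of_nonneg_right
              · exact mul_le_mul_of_nonneg_left hun hε0.le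
              · linarith
            _ ≤ σ * (v - n₀/u) := mul_le_mul_of_nonneg_right hεσn (by linarith)
        have h7 : 0 ≤ S v - S (n₀/u) := by
          nlinarith [mul_nonneg hσpos.le (sub_nonneg.2 h2)]
        have e : 0 ≤ (S u - 1) * (S v - S (n₀/u)) := mul_nonneg (by linarith) h7
        nlinarith [h3, h4, h6, e]
      rcases le_or_gt x n₀ with hxn | hxn
      · rcases le_or_gt y n₀ with hyn2 | hyn2
        · rw [hfle x hxn, hfle y hyn2]
          exact key2b x y hx hxn hy hyn2 hxyn
        · rw [hfle x hxn, hfgt y hyn2.le]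
          exact key2a x y hx hxn hyn2 hxy
      · rcases le_or_gt y n₀ with hyn2 | hyn2
        · rw [hfgt x hxn.le, hfle y hyn2]
          have := key2a y x hy hyn2 hxn (by rw [mul_comm]; exact hxy)
          nlinarith [this]
        · exfalso
          nlinarith [mul_pos (sub_pos.2 hxn) (sub_pos.2 hyn2)]
  exact ⟨hPL, hCont, hMono, hConc, hId, hSub⟩
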